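/- If n is a real number with n < −(1+√2)/2 or n > (√2−1)/2, then ∑_{k=0}^∞ (2(2n+1)²k + 3)/((−n(n+1))^k · C(2k,k)) = −(2n(n+1)/(2n+1))·log(1 + 1/n). -/

import Mathlib

open MeasureTheory intervalIntegral Real

lemma binom_bound (k : ℕ) : (4:ℝ)^k ≤ (2*k+1) * ((2*k).choose k) := by
  have h : (4:ℕ)^k ≤ (2*k+1) * ((2*k).choose k) := by
    calc (4:ℕ)^k = 2^(2*k) := by rw [pow_mul]; norm_num
    _ = ∑ i ∈ Finset.range (2*k+1), (2*k).choose i := (Nat.sum_range_choose (2*k)).symm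
    _ ≤ (2*k+1) * ((2*k).choose k) := by
        have := Finset.sum_le_card_nsmul (Finset.range (2*k+1)) (fun i => (2*k).choose i)
          ((2*k).choose k) (fun i _ => Nat.choose_le_centralBinom i k)
        simpa [Finset.card_range, smul_eq_mul] using this
  exact_mod_cast h

lemma prod_fact (k m : ℕ) : k.factorial * ∏ j ∈ Finset.range m, (k + 1 + j) = (k + m).factorial := by
  induction m with
  | zero => simp
  | succ m ih =>
    rw [Finset.prod_range_succ, ← mul_assoc, ih]
    rw [show k + (m+1) = (k + m) + 1 by ring, Nat.factorial_succ]
    ring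

lemma beta_int (k : ℕ) : ∫ t in (0:ℝ)..1, (t*(1-t))^k = 1/(((2*k+1) : ℝ) * ((2*k).choose k)) := by
  have h := Complex.betaIntegral_eval_nat_add_one_right (u := (k+1 : ℂ))
    (by simp [Complex.add_re]; positivity) k
  have hprod : ∏ j ∈ Finset.range (k + 1), ((k:ℂ) + 1 + j) = ((2*k+1).factorial : ℂ) / (k.factorial : ℂ) := by
    have hn : ((k.factorial : ℂ)) * ∏ j ∈ Finset.range (k+1), ((k:ℂ) + 1 + j) = (((k + (k+1)).factorial : ℕ) : ℂ) := by
      exact_mod_cast prod_fact k (k+1)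
    rw [eq_div_iff (by exact_mod_cast k.factorial_ne_zero)]
    rw [show 2*k+1 = k + (k+1) by ring, ← hn]; ring
  have hbeta : Complex.betaIntegral (k+1) (k+1) = ((k.factorial : ℂ) * k.factorial) / ((2*k+1).factorial : ℂ) := by
    rw [h, hprod, div_div_eq_mul_div]
  have hcast : Complex.betaIntegral (k+1) (k+1) = ((∫ t in (0:ℝ)..1, (t*(1-t))^k : ℝ) : ℂ) := by
    rw [Complex.betaIntegral, ← intervalIntegral.integral_ofReal]
    apply intervalIntegral.integral_congr
    intro x hx
    simp only [add_sub_cancel_right, Complex.cpow_natCast]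
    push_cast
    rw [← mul_pow]
  rw [hcast] at hbeta
  have hre : (∫ t in (0:ℝ)..1, (t*(1-t))^k : ℝ) = ((k.factorial * k.factorial : ℕ) : ℝ) / (((2*k+1).factorial : ℕ) : ℝ) := by
    have hbeta2 : ((∫ t in (0:ℝ)..1, (t*(1-t))^k : ℝ) : ℂ)
        = (((((k.factorial * k.factorial : ℕ) : ℝ) / (((2*k+1).factorial : ℕ) : ℝ)) : ℝ) : ℂ) := by
      push_cast
      exact hbeta
    exact_mod_cast hbeta2
  have hch : (2*k).choose k * k.factorial * k.factorial = (2*k).factorial := by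
    have := Nat.choose_mul_factorial_mul_factorial (Nat.le_mul_of_pos_left k (by norm_num) : k ≤ 2*k)
    simpa [show 2*k - k = k by omega] using this
  have hnat : k.factorial * k.factorial * ((2*k+1) * (2*k).choose k) = (2*k+1).factorial := by
    rw [Nat.factorial_succ, ← hch]; ring
  have hc : (0:ℝ) < ((2*k).choose k : ℝ) := by
    exact_mod_cast Nat.choose_pos (by omega : k ≤ 2*k)
  rw [hre, div_eq_div_iff (by exact_mod_cast (2*k+1).factorial_ne_zero) (ne_of_gt (mul_pos (by positivity) hc)), one_mul]
  exact_mod_cast hnat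
lemma rat_int {p : ℝ} (hp : 1/4 < p) :
    ∫ t in (0:ℝ)..1, p/(p + t*(1-t))
      = (2*p/Real.sqrt (4*p+1)) * (Real.log ((Real.sqrt (4*p+1)+1)/2) - Real.log ((Real.sqrt (4*p+1)-1)/2)) := by
  set s := Real.sqrt (4*p+1) with hs
  have hs2 : s^2 = 4*p+1 := Real.sq_sqrt (by linarith)
  have hs1 : 1 < s := by
    nlinarith [Real.sqrt_nonneg (4*p+1)]
  set a := (1+s)/2 with ha
  set b := (1-s)/2 with hb
  have hb0 : b < 0 := by rw [hb]; linarith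
  have ha1 : 1 < a := by rw [ha]; linarith
  have hpos : ∀ t ∈ Set.uIcc (0:ℝ) 1, 0 < p + t*(1-t) := by
    intro t ht
    rw [Set.uIcc_of_le (by norm_num), Set.mem_Icc] at ht
    have key : p + t*(1-t) = (t - b) * (a - t) := by
      rw [ha, hb]; nlinarith [hs2]
    rw [key]
    exact mul_pos (by linarith) (by linarith)
  have hderiv : ∀ t ∈ Set.uIcc (0:ℝ) 1,
      HasDerivAt (fun t => (p/s) * (Real.log (t - b) - Real.log (a - t))) (p/(p + t*(1-t))) t := by
    intro t ht
    rw [Set.uIcc_of_le (by norm_num), Set.mem_Icc] at ht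
    have htb : 0 < t - b := by linarith [ht.1]
    have hat : 0 < a - t := by linarith [ht.2]
    have h1 : HasDerivAt (fun t : ℝ => Real.log (t - b)) (1/(t-b)) t := by
      have := (Real.hasDerivAt_log (ne_of_gt htb)).comp t ((hasDerivAt_id t).sub_const b)
      simpa [one_div, Function.comp_def] using this
    have h2 : HasDerivAt (fun t : ℝ => Real.log (a - t)) (-(1/(a-t))) t := by
      have hd : HasDerivAt (fun t : ℝ => a - t) (-1) t := by
        simpa using (hasDerivAt_id' t).const_sub a
      have := (Real.hasDerivAt_log (ne_of_gt hat)).comp t hd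
      simpa [one_div, Function.comp_def] using this
      -- (a-t)⁻¹ * (-1)
    have h3 : HasDerivAt (fun t => (p/s) * (Real.log (t - b) - Real.log (a - t))) ((p/s) * (1/(t-b) - -(1/(a-t)))) t := ((h1.sub h2).const_mul (p/s))
    convert h3 using 1
    have key : p + t*(1-t) = (t - b) * (a - t) := by
      rw [ha, hb]; nlinarith [hs2]
    rw [key]
    have hsne : s ≠ 0 := by linarith
    field_simp
    rw [ha, hb]
    ring
  have hcont : IntervalIntegrable (fun t => p/(p + t*(1-t))) volume 0 1 := by
    apply ContinuousOn.intervalIntegrable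
    apply ContinuousOn.div continuousOn_const
    · fun_prop
    · intro t ht; exact ne_of_gt (hpos t ht)
  have := intervalIntegral.integral_eq_sub_of_hasDerivAt hderiv hcont
  rw [this]
  have e1 : (1:ℝ) - b = (s+1)/2 := by rw [hb]; ring
  have e2 : a - 1 = (s-1)/2 := by rw [ha]; ring
  have e3 : (0:ℝ) - b = (s-1)/2 := by rw [hb]; ring
  have e4 : a - 0 = (s+1)/2 := by rw [ha]; ring
  rw [e1, e2, e3, e4]
  ring
lemma series_int {p : ℝ} (hp : 1/4 < p) :
    HasSum (fun k : ℕ => (-1/p)^k / (((2*k+1):ℝ) * ((2*k).choose k : ℝ)))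
      (∫ t in (0:ℝ)..1, p/(p + t*(1-t))) := by
  have hp0 : 0 < p := by linarith
  set F : ℕ → ℝ → ℝ := fun k t => (-1/p)^k * (t*(1-t))^k with hF
  have hcontF : ∀ k, Continuous (F k) := by intro k; fun_prop
  have hInt : ∀ k, Integrable (F k) (volume.restrict (Set.Ioc (0:ℝ) 1)) := by
    intro k
    exact ((hcontF k).integrableOn_Ioc)
  have hchoose : ∀ k : ℕ, (0:ℝ) < ((2*k+1):ℝ) * ((2*k).choose k : ℝ) := by
    intro k
    have : (0:ℝ) < ((2*k).choose k : ℝ) := by exact_mod_cast Nat.choose_pos (by omega : k ≤ 2*k)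
    positivity
  have hIval : ∀ k, ∫ t in Set.Ioc (0:ℝ) 1, F k t = (-1/p)^k / (((2*k+1):ℝ) * ((2*k).choose k : ℝ)) := by
    intro k
    rw [← intervalIntegral.integral_of_le zero_le_one, hF]
    simp only
    rw [intervalIntegral.integral_const_mul, beta_int k, mul_one_div]
  have hNval : ∀ k, ∫ t in Set.Ioc (0:ℝ) 1, ‖F k t‖ = (1/p)^k / (((2*k+1):ℝ) * ((2*k).choose k : ℝ)) := by
    intro k
    have heqon : Set.EqOn (fun t => ‖F k t‖) (fun t => (1/p)^k * (t*(1-t))^k) (Set.Ioc (0:ℝ) 1) := by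
      intro t ht
      have h0 : 0 ≤ t*(1-t) := mul_nonneg (le_of_lt ht.1) (by linarith [ht.2])
      simp only [hF]
      rw [norm_mul, norm_pow, norm_pow, Real.norm_eq_abs, Real.norm_eq_abs,
        abs_of_nonneg h0, abs_div, abs_neg, abs_one, abs_of_pos hp0]
    rw [setIntegral_congr_fun measurableSet_Ioc heqon]
    rw [← intervalIntegral.integral_of_le zero_le_one,
      intervalIntegral.integral_const_mul, beta_int k, mul_one_div]
  have hSum : Summable fun k => ∫ t in Set.Ioc (0:ℝ) 1, ‖F k t‖ := by
    apply Summable.of_nonneg_of_le (fun k => by rw [hNval k]; positivity)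
      (fun k => ?_) (summable_geometric_of_lt_one (by positivity) (r := 1/(4*p)) (by rw [div_lt_one (by linarith)]; linarith))
    rw [hNval k, div_le_iff₀ (hchoose k)]
    calc (1/p)^k = (1/(4*p))^k * 4^k := by rw [← mul_pow]; congr 1; field_simp
    _ ≤ (1/(4*p))^k * ((2*k+1) * ((2*k).choose k)) :=
        mul_le_mul_of_nonneg_left (binom_bound k) (by positivity)
  have hmain := MeasureTheory.hasSum_integral_of_summable_integral_norm hInt hSum
  have heq : ∫ t in Set.Ioc (0:ℝ) 1, (∑' k, F k t) = ∫ t in (0:ℝ)..1, p/(p + t*(1-t)) := by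
    rw [intervalIntegral.integral_of_le zero_le_one]
    apply setIntegral_congr_fun measurableSet_Ioc
    intro t ht
    have h0 : 0 ≤ t*(1-t) := mul_nonneg (le_of_lt ht.1) (by linarith [ht.2])
    have h4 : t*(1-t) ≤ 1/4 := by nlinarith [sq_nonneg (t - 1/2)]
    simp only [hF]
    simp_rw [← mul_pow]
    rw [tsum_geometric_of_norm_lt_one]
    · have hd : 0 < p + t*(1-t) := by linarith
      rw [eq_div_iff (ne_of_gt hd)]
      field_simp
      rw [sub_neg_eq_add, div_self hd.ne']
    · rw [Real.norm_eq_abs, abs_mul, abs_div, abs_neg, abs_one, abs_of_pos hp0, abs_of_nonneg h0]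
      rw [div_mul_eq_mul_div, one_mul, div_lt_one hp0]
      linarith
  rw [heq] at hmain
  have hfn : (fun i : ℕ => ∫ t in Set.Ioc (0:ℝ) 1, F i t)
      = fun k : ℕ => (-1/p)^k / (((2*k+1):ℝ) * ((2*k).choose k : ℝ)) := funext hIval
  rwa [hfn] at hmain
theorem stmt_2 (n : ℝ) (hn : n < -(1 + Real.sqrt 2) / 2 ∨ n > (Real.sqrt 2 - 1) / 2) :
    ∑' k : ℕ, (2 * (2 * n + 1) ^ 2 * k + 3) / ((-(n * (n + 1))) ^ k * (Nat.choose (2 * k) k : ℝ)) =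
      -(2 * n * (n + 1) / (2 * n + 1)) * Real.log (1 + 1 / n) := by
  set p : ℝ := n * (n+1) with hpdef
  have hp : 1/4 < p := by
    have h2 : Real.sqrt 2 ^ 2 = 2 := Real.sq_sqrt (by norm_num)
    have h2n : 0 ≤ Real.sqrt 2 := Real.sqrt_nonneg 2
    rcases hn with h | h
    · nlinarith
    · nlinarith
  have hp0 : 0 < p := by linarith
  have hm : (2*n+1)^2 = 4*p+1 := by rw [hpdef]; ring
  have hC : ∀ k : ℕ, (0:ℝ) < ((2*k).choose k : ℝ) := by
    intro k; exact_mod_cast Nat.choose_pos (by omega : k ≤ 2*k)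
  have hq : ∀ k : ℕ, ((-p)^k : ℝ) ≠ 0 := fun k => pow_ne_zero k (by linarith)
  set C : ℕ → ℝ := fun k => ((2*k).choose k : ℝ) with hCdef
  set f : ℕ → ℝ := fun k => (2 * (2*n+1)^2 * k + 3) / ((-p)^k * C k) with hfdef
  set A : ℕ → ℝ := fun k => (8*p*k) / ((-p)^k * C k) with hAdef
  set h : ℕ → ℝ := fun k => (-1/p)^k / (((2*k+1):ℝ) * C k) with hhdef
  have hrec : ∀ k : ℕ, ((k:ℝ)+1) * C (k+1) = 2*(2*(k:ℝ)+1) * C k := by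
    intro k
    have h0 := Nat.succ_mul_centralBinom_succ k
    simp only [Nat.centralBinom] at h0
    simp only [hCdef]
    exact_mod_cast h0
  have hid : ∀ k : ℕ, f k = (A k - A (k+1)) - h k := by
    intro k
    have hck := hC k
    have hck1 := hC (k+1)
    have hd' : C (k+1) = 2*(2*(k:ℝ)+1) * C k / ((k:ℝ)+1) := by
      rw [eq_div_iff (by positivity)]
      rw [← hrec k]; ring
    simp only [hfdef, hAdef, hhdef]
    rw [hd']
    have hmp : (-1/p)^k = 1/(-p)^k := by
      rw [show (-1:ℝ)/p = (-p)⁻¹ by field_simp, inv_pow, inv_eq_one_div]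
    rw [hmp, hm]
    push_cast
    rw [pow_succ]
    have hk1 : ((k:ℝ)+1) ≠ 0 := by positivity
    have h2k1 : (2*(k:ℝ)+1) ≠ 0 := by positivity
    have hpne : (-p) ≠ 0 := by intro hh; rw [show p = -(-p) by ring, hh] at hp0; norm_num at hp0
    field_simp [hq k, hck.ne', hck1.ne', hk1, h2k1, hpne]
    ring
  -- summability bounds
  set r : ℝ := 1/(4*p) with hrdef
  have hr0 : 0 < r := by positivity
  have hr1 : r < 1 := by rw [hrdef, div_lt_one (by linarith)]; linarith
  have hbound : ∀ k : ℕ, 1/((p:ℝ)^k * C k) ≤ (2*(k:ℝ)+1) * r^k := by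
    intro k
    rw [div_le_iff₀ (mul_pos (pow_pos hp0 k) (hC k))]
    have h4 : (4:ℝ)^k ≤ (2*k+1) * C k := binom_bound k
    have : (2*(k:ℝ)+1) * r^k * (p^k * C k) = ((2*(k:ℝ)+1) * C k) * (r^k * p^k) := by ring
    rw [this]
    have hrp : r^k * p^k = (1/4)^k := by
      rw [← mul_pow]; congr 1; rw [hrdef]; field_simp; try ring
    rw [hrp]
    calc (1:ℝ) = 4^k * (1/4)^k := by rw [← mul_pow]; norm_num
    _ ≤ ((2*(k:ℝ)+1) * C k) * (1/4)^k := by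
        apply mul_le_mul_of_nonneg_right h4 (by positivity)
  have habs : ∀ k : ℕ, |(-p)^k * C k| = p^k * C k := by
    intro k
    rw [abs_mul, abs_pow, abs_neg, abs_of_pos hp0, abs_of_pos (hC k)]
  have hsummable_aux : ∀ a b c : ℝ, Summable (fun k : ℕ => (a*(k:ℝ)^2 + b*k + c) * r^k) := by
    intro a b c
    have h2 := (summable_pow_mul_geometric_of_norm_lt_one 2 (by rwa [Real.norm_eq_abs, abs_of_pos hr0] : ‖r‖ < 1)).mul_left a
    have h1 := (summable_pow_mul_geometric_of_norm_lt_one 1 (by rwa [Real.norm_eq_abs, abs_of_pos hr0] : ‖r‖ < 1)).mul_left b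
    have h0 := (summable_geometric_of_lt_one hr0.le hr1).mul_left c
    have : Summable (fun k : ℕ => a * ((k:ℝ)^2 * r^k) + b * ((k:ℝ)^1 * r^k) + c * r^k) := (h2.add h1).add h0
    convert this using 2 with k
    push_cast
    ring
  have hsf : Summable f := by
    apply Summable.of_norm_bounded (hsummable_aux (4*(4*p+1)) (2*(4*p+1)+6) 3)
    intro k
    simp only [hfdef, Real.norm_eq_abs, abs_div, habs k, hm]
    have hnum : |2*(4*p+1)*(k:ℝ) + 3| = 2*(4*p+1)*(k:ℝ) + 3 := abs_of_pos (by positivity)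
    rw [hnum]
    calc (2*(4*p+1)*(k:ℝ) + 3) / (p^k * C k)
        = (2*(4*p+1)*(k:ℝ) + 3) * (1/(p^k * C k)) := by ring
    _ ≤ (2*(4*p+1)*(k:ℝ) + 3) * ((2*(k:ℝ)+1) * r^k) := by
        apply mul_le_mul_of_nonneg_left (hbound k) (by positivity)
    _ = (4*(4*p+1)*(k:ℝ)^2 + (2*(4*p+1)+6)*(k:ℝ) + 3) * r^k := by ring
  have hT := series_int hp
  have hsh : Summable h := by
    rw [hhdef]; exact hT.summable
  have hAlim : Filter.Tendsto A Filter.atTop (nhds 0) := by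
    have hblim : Filter.Tendsto (fun k : ℕ => 8*p*(k:ℝ)*((2*(k:ℝ)+1) * r^k)) Filter.atTop (nhds 0) := by
      have := (hsummable_aux (16*p) (8*p) 0).tendsto_atTop_zero
      convert this using 2 with k
      push_cast
      ring
    apply squeeze_zero_norm _ hblim
    intro k
    simp only [hAdef, Real.norm_eq_abs, abs_div, habs k]
    rw [abs_of_nonneg (by positivity : (0:ℝ) ≤ 8*p*(k:ℝ))]
    calc (8*p*(k:ℝ)) / (p^k * C k) = (8*p*(k:ℝ)) * (1/(p^k * C k)) := by ring
    _ ≤ 8*p*(k:ℝ)*((2*(k:ℝ)+1) * r^k) :=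
        mul_le_mul_of_nonneg_left (hbound k) (by positivity)
  set g : ℕ → ℝ := fun k => f k + h k with hgdef
  have hsg : Summable g := hsf.add hsh
  have hgtel : ∀ k, g k = A k - A (k+1) := by
    intro k; rw [hgdef]; simp only; rw [hid k]; ring
  have htsum_g : ∑' k, g k = 0 := by
    have h1 : Filter.Tendsto (fun K => ∑ i ∈ Finset.range K, g i) Filter.atTop (nhds (∑' k, g k)) :=
      hsg.hasSum.tendsto_sum_nat
    have h2 : ∀ K, ∑ i ∈ Finset.range K, g i = A 0 - A K := by
      intro K
      rw [Finset.sum_congr rfl (fun i _ => hgtel i)]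
      exact Finset.sum_range_sub' A K
    have h3 : Filter.Tendsto (fun K => ∑ i ∈ Finset.range K, g i) Filter.atTop (nhds (A 0 - 0)) := by
      simp_rw [h2]
      exact Filter.Tendsto.const_sub _ hAlim
    have hA0 : A 0 = 0 := by simp [hAdef]
    have := tendsto_nhds_unique h1 h3
    rw [this, hA0, sub_zero]
  have hmain : ∑' k, f k = - ∑' k, h k := by
    have : ∀ k, f k = g k - h k := by intro k; rw [hgdef]; ring
    rw [tsum_congr this, Summable.tsum_sub hsg hsh, htsum_g, zero_sub]
  -- final evaluation
  have hTval : ∑' k, h k = 2 * p / (2*n+1) * Real.log (1 + 1/n) := by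
    have hn0 : n ≠ 0 := by
      intro h0; rw [hpdef, h0] at hp0; norm_num at hp0
    have hn1 : n + 1 ≠ 0 := by
      intro h0; rw [hpdef] at hp0; nlinarith
    have h2n1 : (2*n+1) ≠ 0 := by
      intro h0
      have : p = -(1/4) := by rw [hpdef]; nlinarith
      linarith
    have hTeq : ∑' k, h k = ∫ t in (0:ℝ)..1, p/(p + t*(1-t)) := by
      rw [hhdef]; exact hT.tsum_eq
    have hsval : Real.sqrt (4*p+1) = |2*n+1| := by rw [← hm, Real.sqrt_sq_eq_abs]
    have hlog : Real.log (1 + 1/n) = Real.log (n+1) - Real.log n := by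
      rw [show 1 + 1/n = (n+1)/n by field_simp, Real.log_div hn1 hn0]
    rw [hTeq, rat_int hp, hsval, hlog]
    rcases lt_or_gt_of_ne h2n1 with hneg | hpos
    · rw [abs_of_neg hneg,
        show (-(2*n+1)+1)/2 = -n by ring,
        show (-(2*n+1)-1)/2 = -(n+1) by ring,
        Real.log_neg_eq_log, Real.log_neg_eq_log, div_neg]
      ring
    · rw [abs_of_pos hpos,
        show ((2*n+1)+1)/2 = n+1 by ring,
        show ((2*n+1)-1)/2 = n by ring]
  calc ∑' (k : ℕ), (2 * (2 * n + 1) ^ 2 * (k:ℝ) + 3) / ((-(n * (n + 1))) ^ k * ((2*k).choose k : ℝ))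
      = ∑' k, f k := by rfl
  _ = - ∑' k, h k := hmain
  _ = -(2 * n * (n + 1) / (2 * n + 1)) * Real.log (1 + 1 / n) := by
      rw [hTval]; rw [hpdef] at *; ring
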